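/- There is a universal constant c > 0 with the following property. In the ball model of hyperbolic 3-space with center O, let H be a horoball whose interior does not contain O, and let P₁, P₂ ∈ ∂H lie outside the hyperbolic ball B_H(O; N). Then the hyperbolic geodesic segment [P₁, P₂] lies outside B_H(O; N/4 − c). -/

import Mathlib

open Filter Set
open scoped ENNReal

noncomputable section

abbrev E3 := EuclideanSpace ℝ (Fin 3)

/-- The open unit ball: the Poincaré ball model of hyperbolic 3-space. -/
def ball3 : Set E3 := Metric.ball 0 1

/-- Hyperbolic distance in the Poincaré ball model. -/
def hDist (x y : E3) : ℝ :=
  2 * Real.arsinh (dist x y / Real.sqrt ((1 - ‖x‖ ^ 2) * (1 - ‖y‖ ^ 2)))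

/-- The hyperbolic geodesic segment between `x` and `y`: points of the ball lying
between them with respect to the hyperbolic metric. -/
def hSeg (x y : E3) : Set E3 :=
  {z | z ∈ ball3 ∧ hDist x z + hDist z y = hDist x y}

/-- A horoball in the ball model: a closed Euclidean ball internally tangent to the
unit sphere. -/
def Horoball (H : Set E3) : Prop :=
  ∃ c : E3, ∃ r : ℝ, 0 < r ∧ ‖c‖ = 1 - r ∧ H = Metric.closedBall c r

/-- A (complete) geodesic line in the ball model. -/
def IsGeodesicLine (L : Set E3) : Prop :=
  ∃ γ : ℝ → E3, (∀ t, γ t ∈ ball3) ∧ (∀ s t, hDist (γ s) (γ t) = |s - t|) ∧ L = Set.range γ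

/-- Hyperbolic distance from a point to a set. -/
def hDistToSet (x : E3) (L : Set E3) : ℝ := sInf ((hDist x) '' L)

/-- The equidistant tube of radius `R` about a geodesic line `L`. -/
def tube (L : Set E3) (R : ℝ) : Set E3 := {x ∈ ball3 | hDistToSet x L ≤ R}

/-- The boundary of the equidistant tube of radius `R` about `L`. -/
def tubeBoundary (L : Set E3) (R : ℝ) : Set E3 := {x ∈ ball3 | hDistToSet x L = R}

/-- A thin component: a horoball or an equidistant tube (of radius at least `R₀`). -/
def ThinR (R₀ : ℝ) (T : Set E3) : Prop :=
  Horoball T ∨ ∃ L R, IsGeodesicLine L ∧ R₀ ≤ R ∧ T = tube L R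

/-- Length of a path `γ` on `[a,b]`, measured with respect to a distance function `d`,
as the supremum of the `d`-lengths of inscribed polygonal approximations. -/
def pathELength {α : Type*} (d : α → α → ℝ) (γ : ℝ → α) (a b : ℝ) : ℝ≥0∞ :=
  ⨆ p : {q : ℕ × (ℕ → ℝ) // Monotone q.2 ∧ q.2 0 = a ∧ q.2 q.1 = b ∧
      ∀ i, q.2 i ∈ Set.Icc a b},
    ∑ i ∈ Finset.range p.1.1, ENNReal.ofReal (d (γ (p.1.2 i)) (γ (p.1.2 (i + 1))))

/-- The intrinsic (induced path) distance between `x` and `y` inside the set `S`,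
with respect to the distance function `d`. -/
def intrinsicDist {α : Type*} [TopologicalSpace α] (d : α → α → ℝ) (S : Set α)
    (x y : α) : ℝ≥0∞ :=
  ⨅ γ : {γ : ℝ → α // ContinuousOn γ (Set.Icc 0 1) ∧ γ 0 = x ∧ γ 1 = y ∧
      ∀ t ∈ Set.Icc (0 : ℝ) 1, γ t ∈ S},
    pathELength d γ.1 0 1

/-- A bijective self-map of the ball preserving the hyperbolic metric. -/
def IsHIsom (A : E3 → E3) : Prop :=
  Set.BijOn A ball3 ball3 ∧ ∀ x ∈ ball3, ∀ y ∈ ball3, hDist (A x) (A y) = hDist x y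

/-- An action of a group by hyperbolic isometries of the ball model. -/
def IsIsomAction {Γ : Type*} [Group Γ] (ρ : Γ → E3 → E3) : Prop :=
  (∀ g, IsHIsom (ρ g)) ∧ (∀ x, ρ 1 x = x) ∧ ∀ g h x, ρ (g * h) x = ρ g (ρ h x)

/-- Word length with respect to a (symmetrized) generating set `S`. -/
def wordLength {Γ : Type*} [Group Γ] (S : Set Γ) (g : Γ) : ℕ :=
  sInf {n | ∃ l : List Γ, l.length = n ∧ (∀ x ∈ l, x ∈ S ∨ x⁻¹ ∈ S) ∧ l.prod = g}

/-- The limit set: accumulation points on the sphere at infinity of the orbit of `O`. -/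
def limitSet {Γ : Type*} [Group Γ] (ρ : Γ → E3 → E3) (O : E3) : Set E3 :=
  {ξ | ‖ξ‖ = 1 ∧ ∃ u : ℕ → Γ, Tendsto (fun n => ρ (u n) O) atTop (nhds ξ)}

/-- Hyperbolic convexity. -/
def hConvex (C : Set E3) : Prop := ∀ x ∈ C, ∀ y ∈ C, hSeg x y ⊆ C

/-- The hyperbolic convex hull (in the ball) of a subset `Λ` of the sphere at infinity. -/
def limitHull (Λ : Set E3) : Set E3 :=
  (⋂₀ {C | C ⊆ ball3 ∧ hConvex C ∧ Λ ⊆ closure C}) ∩ ball3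

/-- Convex cocompactness: the orbit of `O` is cobounded in the convex hull of the
limit set (i.e. the quotient of the convex core is compact). -/
def ConvexCocompact {Γ : Type*} [Group Γ] (ρ : Γ → E3 → E3) (O : E3) : Prop :=
  ∃ D : ℝ, ∀ x ∈ limitHull (limitSet ρ O), ∃ g : Γ, hDist x (ρ g O) ≤ D

/-- `g` acts as a parabolic isometry: no fixed point in the ball, and zero
infimal displacement. -/
def IsParabolicIsom (A : E3 → E3) : Prop :=
  (∀ x ∈ ball3, A x ≠ x) ∧ sInf {d | ∃ x ∈ ball3, d = hDist x (A x)} = 0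

/-- Geometric finiteness, phrased via a Γ-invariant family of disjoint horoballs whose
complement in the convex core is cobounded for the orbit of `O`. -/
def GeomFiniteBall {Γ : Type*} [Group Γ] (ρ : Γ → E3 → E3) (O : E3) : Prop :=
  ∃ 𝓗 : Set (Set E3),
    (∀ H ∈ 𝓗, Horoball H) ∧
    (∀ H ∈ 𝓗, ∀ H' ∈ 𝓗, H ≠ H' → Disjoint H H') ∧
    (∀ g : Γ, ∀ H ∈ 𝓗, (ρ g) '' H ∈ 𝓗) ∧
    ∃ D : ℝ, ∀ x ∈ limitHull (limitSet ρ O) \ ⋃₀ 𝓗, ∃ g : Γ, hDist x (ρ g O) ≤ D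



/-! ### Auxiliary lemmas for Statement 6 -/

local notation "⟪" x ", " y "⟫" => @inner ℝ _ _ x y

/-- The argument of `arsinh` in the hyperbolic distance. -/
def sig (x y : E3) : ℝ := dist x y / Real.sqrt ((1 - ‖x‖ ^ 2) * (1 - ‖y‖ ^ 2))

lemma hDist_def (x y : E3) : hDist x y = 2 * Real.arsinh (sig x y) := rfl

lemma A_pos {x : E3} (hx : ‖x‖ < 1) : 0 < 1 - ‖x‖ ^ 2 := by nlinarith [norm_nonneg x]

lemma sig_nonneg (x y : E3) : 0 ≤ sig x y := div_nonneg dist_nonneg (Real.sqrt_nonneg _)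

lemma hDist_nonneg (x y : E3) : 0 ≤ hDist x y :=
  mul_nonneg (by norm_num) (Real.arsinh_nonneg_iff.mpr (sig_nonneg x y))

lemma sig_comm (x y : E3) : sig x y = sig y x := by
  unfold sig; rw [dist_comm, mul_comm (1 - ‖x‖ ^ 2)]

lemma hDist_comm (x y : E3) : hDist x y = hDist y x := by
  rw [hDist_def, hDist_def, sig_comm]

/-- The "conjugate-point" quantity appearing in `cosh` of the hyperbolic distance. -/
def G (x y : E3) : ℝ := Real.sqrt (‖x‖ ^ 2 * ‖y‖ ^ 2 - 2 * ⟪x, y⟫ + 1)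

lemma G_sq_arg (x y : E3) :
    ‖x‖ ^ 2 * ‖y‖ ^ 2 - 2 * ⟪x, y⟫ + 1
      = (1 - ‖x‖ ^ 2) * (1 - ‖y‖ ^ 2) + dist x y ^ 2 := by
  rw [dist_eq_norm, norm_sub_sq_real]; ring

/-- Ptolemy-type inequality in the ball, via inversion in `z`. -/
lemma ptolemy_key (x y z : E3) (hz : ‖z‖ < 1) :
    dist x y * (1 - ‖z‖ ^ 2) ≤ dist x z * G z y + dist z y * G x z := by
  by_cases h0 : z = 0
  · subst h0
    have hG1 : G 0 y = 1 := by simp [G]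
    have hG2 : G x 0 = 1 := by simp [G]
    simpa [hG1, hG2] using dist_triangle x 0 y
  · have hzpos : (0:ℝ) < ‖z‖ := norm_pos_iff.mpr h0
    set w : E3 := (‖z‖ ^ 2)⁻¹ • z with hw
    have hz2 : (‖z‖ ^ 2) ≠ 0 := by positivity
    have hww : ‖w‖ = ‖z‖⁻¹ := by
      rw [hw, norm_smul]
      rw [norm_inv, norm_pow, norm_norm]
      field_simp
      try ring
    have hinner : ∀ v : E3, ⟪v, w⟫ = (‖z‖ ^ 2)⁻¹ * ⟪v, z⟫ := by
      intro v; rw [hw, real_inner_smul_right]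
    have c1 : ‖z‖ * dist x w = G x z := by
      have : (‖z‖ * dist x w) ^ 2 = ‖x‖ ^ 2 * ‖z‖ ^ 2 - 2 * ⟪x, z⟫ + 1 := by
        rw [mul_pow, dist_eq_norm, norm_sub_sq_real, hinner, hww]
        field_simp
        try ring
      rw [G, ← this, Real.sqrt_sq (by positivity)]
    have c2 : ‖z‖ * dist y w = G z y := by
      have : (‖z‖ * dist y w) ^ 2 = ‖z‖ ^ 2 * ‖y‖ ^ 2 - 2 * ⟪z, y⟫ + 1 := by
        rw [mul_pow, dist_eq_norm, norm_sub_sq_real, hinner, hww, real_inner_comm]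
        field_simp
        try ring
      rw [G, ← this, Real.sqrt_sq (by positivity)]
    have c3 : ‖z‖ * dist z w = 1 - ‖z‖ ^ 2 := by
      have : (‖z‖ * dist z w) ^ 2 = (1 - ‖z‖ ^ 2) ^ 2 := by
        rw [mul_pow, dist_eq_norm, norm_sub_sq_real, hinner, hww,
          real_inner_self_eq_norm_sq]
        field_simp
        try ring
      have h1 : ‖z‖ * dist z w = |1 - ‖z‖ ^ 2| := by
        rw [← Real.sqrt_sq (by positivity : (0:ℝ) ≤ ‖z‖ * dist z w), this,
          Real.sqrt_sq_eq_abs]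
      rw [h1, abs_of_pos (A_pos hz)]
    have pt := EuclideanGeometry.mul_dist_le_mul_dist_add_mul_dist x z y w
    calc dist x y * (1 - ‖z‖ ^ 2) = ‖z‖ * (dist x y * dist z w) := by rw [← c3]; ring
      _ ≤ ‖z‖ * (dist x z * dist y w + dist z y * dist x w) :=
          mul_le_mul_of_nonneg_left pt hzpos.le
      _ = dist x z * (‖z‖ * dist y w) + dist z y * (‖z‖ * dist x w) := by ring
      _ = dist x z * G z y + dist z y * G x z := by rw [c1, c2]

lemma one_add_sig_sq (x y : E3) (hx : ‖x‖ < 1) (hy : ‖y‖ < 1) :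
    Real.sqrt (1 + sig x y ^ 2)
      = G x y / (Real.sqrt (1 - ‖x‖ ^ 2) * Real.sqrt (1 - ‖y‖ ^ 2)) := by
  have hax := A_pos hx
  have hay := A_pos hy
  have hprod : (0:ℝ) < (1 - ‖x‖ ^ 2) * (1 - ‖y‖ ^ 2) := mul_pos hax hay
  have h1 : sig x y ^ 2 = dist x y ^ 2 / ((1 - ‖x‖ ^ 2) * (1 - ‖y‖ ^ 2)) := by
    rw [sig, div_pow, Real.sq_sqrt hprod.le]
  have h2 : 1 + sig x y ^ 2
      = (‖x‖ ^ 2 * ‖y‖ ^ 2 - 2 * ⟪x, y⟫ + 1) / ((1 - ‖x‖ ^ 2) * (1 - ‖y‖ ^ 2)) := by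
    rw [h1, G_sq_arg]
    field_simp
  have hnum : (0:ℝ) ≤ ‖x‖ ^ 2 * ‖y‖ ^ 2 - 2 * ⟪x, y⟫ + 1 := by
    rw [G_sq_arg]; positivity
  rw [h2, Real.sqrt_div hnum, Real.sqrt_mul hax.le, G]

/-- Triangle inequality for the hyperbolic distance in the ball. -/
lemma hDist_triangle {x y z : E3} (hx : ‖x‖ < 1) (hy : ‖y‖ < 1) (hz : ‖z‖ < 1) :
    hDist x y ≤ hDist x z + hDist z y := by
  rw [hDist_def, hDist_def, hDist_def]
  have key : sig x y ≤ Real.sinh (Real.arsinh (sig x z) + Real.arsinh (sig z y)) := by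
    rw [Real.sinh_add, Real.sinh_arsinh, Real.sinh_arsinh, Real.cosh_arsinh,
      Real.cosh_arsinh, one_add_sig_sq _ _ hz hy, one_add_sig_sq _ _ hx hz]
    have hax := A_pos hx
    have hay := A_pos hy
    have haz := A_pos hz
    set sx := Real.sqrt (1 - ‖x‖ ^ 2) with hsx
    set sy := Real.sqrt (1 - ‖y‖ ^ 2) with hsy
    set sz := Real.sqrt (1 - ‖z‖ ^ 2) with hsz
    have hsxp : 0 < sx := Real.sqrt_pos.mpr hax
    have hsyp : 0 < sy := Real.sqrt_pos.mpr hay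
    have hszp : 0 < sz := Real.sqrt_pos.mpr haz
    have hzz : sz * sz = 1 - ‖z‖ ^ 2 := Real.mul_self_sqrt haz.le
    have e1 : sig x y = dist x y / (sx * sy) := by
      rw [sig, Real.sqrt_mul hax.le]
    have e2 : sig x z = dist x z / (sx * sz) := by
      rw [sig, Real.sqrt_mul hax.le]
    have e3 : sig z y = dist z y / (sz * sy) := by
      rw [sig, Real.sqrt_mul haz.le]
    rw [e1, e2, e3]
    have pt := ptolemy_key x y z hz
    calc dist x y / (sx * sy)
        ≤ (dist x z * G z y + dist z y * G x z) / ((sx * sy) * (1 - ‖z‖ ^ 2)) := by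
          rw [div_le_div_iff₀ (by positivity) (by positivity)]
          calc dist x y * (sx * sy * (1 - ‖z‖ ^ 2))
              = (dist x y * (1 - ‖z‖ ^ 2)) * (sx * sy) := by ring
            _ ≤ (dist x z * G z y + dist z y * G x z) * (sx * sy) :=
                mul_le_mul_of_nonneg_right pt (by positivity)
      _ = dist x z / (sx * sz) * (G z y / (sz * sy))
            + G x z / (sx * sz) * (dist z y / (sz * sy)) := by
          rw [← hzz]; field_simp
  have h := Real.arsinh_le_arsinh.mpr key
  rw [Real.arsinh_sinh] at h
  linarith

lemma sig_zero_left (y : E3) : sig 0 y = ‖y‖ / Real.sqrt (1 - ‖y‖ ^ 2) := by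
  rw [sig]; simp

lemma horo_dist_le (cc : E3) (r : ℝ) (hr : 0 < r) (hcc : ‖cc‖ = 1 - r)
    (h2r : r ≤ 1 - r) {P : E3} (hP : dist P cc = r) (hPn : ‖P‖ < 1) :
    dist P ((1 - r)⁻¹ • cc) ≤ Real.sqrt (1 - ‖P‖ ^ 2) := by
  have h1r : (0:ℝ) < 1 - r := lt_of_lt_of_le hr h2r
  have hip : 2 * ⟪P, cc⟫ = ‖P‖ ^ 2 + 1 - 2 * r := by
    have h := hP
    rw [dist_eq_norm] at h
    have h2 : ‖P - cc‖ ^ 2 = r ^ 2 := by rw [h]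
    rw [norm_sub_sq_real, hcc] at h2
    nlinarith
  have hsq : dist P ((1 - r)⁻¹ • cc) ^ 2 = (r / (1 - r)) * (1 - ‖P‖ ^ 2) := by
    rw [dist_eq_norm, norm_sub_sq_real, real_inner_smul_right, norm_smul]
    rw [norm_inv, Real.norm_eq_abs, abs_of_pos h1r, hcc]
    have hinner : ⟪P, cc⟫ = (‖P‖ ^ 2 + 1 - 2 * r) / 2 := by linarith
    rw [hinner]
    field_simp
    ring
  have hle : dist P ((1 - r)⁻¹ • cc) ^ 2 ≤ 1 - ‖P‖ ^ 2 := by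
    rw [hsq]
    have h01 : r / (1 - r) ≤ 1 := (div_le_one h1r).mpr h2r
    nlinarith [A_pos hPn]
  calc dist P ((1 - r)⁻¹ • cc) = Real.sqrt (dist P ((1 - r)⁻¹ • cc) ^ 2) :=
        (Real.sqrt_sq dist_nonneg).symm
    _ ≤ Real.sqrt (1 - ‖P‖ ^ 2) := Real.sqrt_le_sqrt hle

/-- Key horosphere estimate via Ptolemy with the point of tangency. -/
lemma horo_sig (cc : E3) (r : ℝ) (hr : 0 < r) (hcc : ‖cc‖ = 1 - r)
    (h2r : r ≤ 1 - r) {P₁ P₂ : E3} (h1 : dist P₁ cc = r) (h2 : dist P₂ cc = r)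
    (hP1 : ‖P₁‖ < 1) (hP2 : ‖P₂‖ < 1) :
    sig P₁ P₂ ≤ sig 0 P₁ + sig 0 P₂ := by
  have h1r : (0:ℝ) < 1 - r := lt_of_lt_of_le hr h2r
  set n : E3 := (1 - r)⁻¹ • cc with hn
  have hnorm : ‖n‖ = 1 := by
    rw [hn, norm_smul, norm_inv, Real.norm_eq_abs, abs_of_pos h1r, hcc]
    field_simp
  have d1 : dist P₁ n ≤ Real.sqrt (1 - ‖P₁‖ ^ 2) := horo_dist_le cc r hr hcc h2r h1 hP1
  have d2 : dist P₂ n ≤ Real.sqrt (1 - ‖P₂‖ ^ 2) := horo_dist_le cc r hr hcc h2r h2 hP2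
  have pt := EuclideanGeometry.mul_dist_le_mul_dist_add_mul_dist P₁ (0:E3) P₂ n
  rw [dist_zero_left, hnorm, mul_one, dist_zero_right, dist_zero_left] at pt
  set s1 := Real.sqrt (1 - ‖P₁‖ ^ 2) with hs1
  set s2 := Real.sqrt (1 - ‖P₂‖ ^ 2) with hs2
  have hs1p : 0 < s1 := Real.sqrt_pos.mpr (A_pos hP1)
  have hs2p : 0 < s2 := Real.sqrt_pos.mpr (A_pos hP2)
  have key : dist P₁ P₂ ≤ ‖P₁‖ * s2 + ‖P₂‖ * s1 := by
    calc dist P₁ P₂ ≤ ‖P₁‖ * dist P₂ n + ‖P₂‖ * dist P₁ n := pt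
      _ ≤ ‖P₁‖ * s2 + ‖P₂‖ * s1 :=
          add_le_add (mul_le_mul_of_nonneg_left d2 (norm_nonneg _))
            (mul_le_mul_of_nonneg_left d1 (norm_nonneg _))
  rw [sig, sig_zero_left, sig_zero_left, Real.sqrt_mul (A_pos hP1).le, ← hs1, ← hs2]
  rw [div_add_div _ _ (ne_of_gt hs1p) (ne_of_gt hs2p),
    div_le_div_iff₀ (by positivity) (by positivity)]
  nlinarith [mul_le_mul_of_nonneg_right key (by positivity : (0:ℝ) ≤ s1 * s2)]

lemma arsinh_two_mul {t : ℝ} (ht : 0 ≤ t) :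
    Real.arsinh (2 * t) ≤ Real.arsinh t + Real.log 2 := by
  have hs : (1:ℝ) ≤ Real.sqrt (1 + t ^ 2) := by
    have h := Real.sqrt_le_sqrt (show (1:ℝ) ≤ 1 + t ^ 2 by nlinarith)
    rwa [Real.sqrt_one] at h
  have hpos : (0:ℝ) < t + Real.sqrt (1 + t ^ 2) := by linarith
  unfold Real.arsinh
  rw [← Real.log_mul (by positivity) (by norm_num)]
  apply Real.log_le_log (by positivity)
  have h4 : Real.sqrt (1 + (2 * t) ^ 2) ≤ 2 * Real.sqrt (1 + t ^ 2) := by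
    rw [show 2 * Real.sqrt (1 + t ^ 2) = Real.sqrt (4 * (1 + t ^ 2)) by
      rw [Real.sqrt_mul (by norm_num), show Real.sqrt 4 = 2 by
        rw [show (4:ℝ) = 2 ^ 2 by norm_num, Real.sqrt_sq (by norm_num)]]]
    exact Real.sqrt_le_sqrt (by nlinarith)
  nlinarith

/-- There is a universal `c > 0` such that if `H` is a horoball whose
interior does not contain the centre `O = 0`, and `P₁, P₂ ∈ ∂H` lie outside the
hyperbolic `N`-ball about `O`, then the geodesic segment `[P₁,P₂]` lies outside the
hyperbolic ball of radius `N/4 - c` about `O`. -/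
theorem stmt6 :
    ∃ c : ℝ, 0 < c ∧ ∀ (N : ℝ) (H : Set E3) (P₁ P₂ : E3),
      Horoball H → (0 : E3) ∉ interior H →
      P₁ ∈ frontier H ∩ ball3 → P₂ ∈ frontier H ∩ ball3 →
      N ≤ hDist 0 P₁ → N ≤ hDist 0 P₂ →
      ∀ z ∈ hSeg P₁ P₂, N / 4 - c ≤ hDist 0 z := by
  have hlog2 : 0 < Real.log 2 := Real.log_pos (by norm_num)
  refine ⟨Real.log 2, hlog2, ?_⟩
  intro N H P₁ P₂ hH h0 hP₁ hP₂ hN1 hN2 z hzseg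
  obtain ⟨cc, r, hr, hcc, rfl⟩ := hH
  have h2r : r ≤ 1 - r := by
    rw [interior_closedBall cc hr.ne'] at h0
    have hnot : ¬ dist (0:E3) cc < r := fun h => h0 (Metric.mem_ball.mpr h)
    rw [dist_zero_left, hcc] at hnot
    linarith [not_lt.mp hnot]
  obtain ⟨hP₁f, hP₁b⟩ := hP₁
  obtain ⟨hP₂f, hP₂b⟩ := hP₂
  rw [frontier_closedBall cc hr.ne'] at hP₁f hP₂f
  have hd1 : dist P₁ cc = r := Metric.mem_sphere.mp hP₁f
  have hd2 : dist P₂ cc = r := Metric.mem_sphere.mp hP₂f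
  have hP1n : ‖P₁‖ < 1 := by
    simpa [ball3, Metric.mem_ball, dist_zero_right] using hP₁b
  have hP2n : ‖P₂‖ < 1 := by
    simpa [ball3, Metric.mem_ball, dist_zero_right] using hP₂b
  obtain ⟨hzb, hzeq⟩ := hzseg
  have hzn : ‖z‖ < 1 := by
    simpa [ball3, Metric.mem_ball, dist_zero_right] using hzb
  have h0n : ‖(0:E3)‖ < 1 := by simp
  have hσ := horo_sig cc r hr hcc h2r hd1 hd2 hP1n hP2n
  have hd12 : hDist P₁ P₂ ≤ max (hDist 0 P₁) (hDist 0 P₂) + 2 * Real.log 2 := by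
    rcases le_total (sig 0 P₁) (sig 0 P₂) with hc | hc
    · have h2M : sig P₁ P₂ ≤ 2 * sig 0 P₂ := by linarith
      have t1 := Real.arsinh_le_arsinh.mpr h2M
      have t2 := arsinh_two_mul (sig_nonneg 0 P₂)
      have t3 := le_max_right (hDist 0 P₁) (hDist 0 P₂)
      have e2 := hDist_def 0 P₂
      rw [hDist_def]
      linarith
    · have h2M : sig P₁ P₂ ≤ 2 * sig 0 P₁ := by linarith
      have t1 := Real.arsinh_le_arsinh.mpr h2M
      have t2 := arsinh_two_mul (sig_nonneg 0 P₁)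
      have t3 := le_max_left (hDist 0 P₁) (hDist 0 P₂)
      have e2 := hDist_def 0 P₁
      rw [hDist_def]
      linarith
  have tr1 : hDist 0 P₁ ≤ hDist 0 z + hDist P₁ z := by
    have h := hDist_triangle h0n hP1n hzn
    rwa [hDist_comm z P₁] at h
  have tr2 : hDist 0 P₂ ≤ hDist 0 z + hDist z P₂ := hDist_triangle h0n hP2n hzn
  have ht0 : 0 ≤ hDist 0 z := hDist_nonneg _ _
  have hfinal : N ≤ 2 * hDist 0 z + 2 * Real.log 2 := by
    rcases le_total (hDist 0 P₁) (hDist 0 P₂) with hm | hm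
    · rw [max_eq_right hm] at hd12; linarith
    · rw [max_eq_left hm] at hd12; linarith
  rcases le_or_gt 0 N with h | h
  · linarith
  · linarith

end
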